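/- Let Ω ⊆ ℝ^N be nonempty open of finite measure, p ∈ [1,∞), u ∈ W^{1,p}(Ω), and let θ ∈ C_c^1(Ω) with ∫_Ω θ ≠ 0. Define the affine function g_θ(x) := (−(∫_Ω θ)^{−1} ∫_Ω u(y) ∇θ(y) dy) · x. Then ∫_Ω |∇(u − g_θ)(x)|^p dx ≤ (|Ω|^{p−1} ‖θ‖_∞^p / |∫_Ω θ|^p) ∫_{Ω×Ω} |∇u(y) − ∇u(x)|^p dx dy. -/

import Mathlib

open MeasureTheory Set Metric
open scoped ENNReal NNReal

open Filter Topology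
open scoped Convolution

/-- `G` is a weak gradient of `u` on the open set `Ω`. -/
def HasWeakGradientOn {N : ℕ} (u : EuclideanSpace ℝ (Fin N) → ℝ)
    (G : EuclideanSpace ℝ (Fin N) → EuclideanSpace ℝ (Fin N))
    (Ω : Set (EuclideanSpace ℝ (Fin N))) : Prop :=
  LocallyIntegrableOn u Ω ∧ LocallyIntegrableOn G Ω ∧
    ∀ φ : EuclideanSpace ℝ (Fin N) → ℝ, ContDiff ℝ (⊤ : ℕ∞) φ → HasCompactSupport φ →
      tsupport φ ⊆ Ω → ∀ v : EuclideanSpace ℝ (Fin N),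
        ∫ x in Ω, u x * fderiv ℝ φ x v = - ∫ x in Ω, φ x * (inner ℝ (G x) v : ℝ)



/-- Hölder: `(∫⁻ f)^p ≤ μ(univ)^(p-1) * ∫⁻ f^p` for `1 ≤ p`. -/
lemma lint_rpow_le {α : Type*} [MeasurableSpace α] (μ : Measure α) {f : α → ℝ≥0∞}
    (hf : AEMeasurable f μ) {p : ℝ} (hp1 : 1 ≤ p) :
    (∫⁻ a, f a ∂μ) ^ p ≤ (μ univ) ^ (p - 1) * ∫⁻ a, (f a) ^ p ∂μ := by
  rcases eq_or_lt_of_le hp1 with h1 | h1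
  · simp [← h1]
  · have hpq := Real.HolderConjugate.conjExponent h1
    set q := Real.conjExponent p with hq
    have hp0 : (0:ℝ) ≤ p := le_trans zero_le_one hp1
    have h0 : ∫⁻ a, f a ∂μ ≤ (∫⁻ a, f a ^ p ∂μ) ^ (1 / p) * (μ univ) ^ (1 / q) := by
      have := ENNReal.lintegral_mul_le_Lp_mul_Lq μ hpq hf (aemeasurable_const (b := (1:ℝ≥0∞)))
      simpa [ENNReal.one_rpow] using this
    calc (∫⁻ a, f a ∂μ) ^ p ≤ ((∫⁻ a, f a ^ p ∂μ) ^ (1 / p) * (μ univ) ^ (1 / q)) ^ p :=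
          ENNReal.rpow_le_rpow h0 hp0
      _ = (∫⁻ a, f a ^ p ∂μ) * (μ univ) ^ (p - 1) := by
          rw [ENNReal.mul_rpow_of_nonneg _ _ hp0, ← ENNReal.rpow_mul, ← ENNReal.rpow_mul]
          have e1 : 1 / p * p = 1 := by field_simp
          have e2 : 1 / q * p = p - 1 := by
            rw [mul_comm, ← div_eq_mul_one_div]
            exact hpq.div_conj_eq_sub_one
          rw [e1, e2, ENNReal.rpow_one]
      _ = (μ univ) ^ (p - 1) * ∫⁻ a, f a ^ p ∂μ := mul_comm _ _

/-- sup-bound for convolution against a normalized bump. -/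
lemma bump_conv_abs_le {N : ℕ} (φ : ContDiffBump (0 : EuclideanSpace ℝ (Fin N)))
    {g : EuclideanSpace ℝ (Fin N) → ℝ} (hg : Continuous g) {C : ℝ} (hC : 0 ≤ C)
    (hb : ∀ y, |g y| ≤ C) (x : EuclideanSpace ℝ (Fin N)) :
    |(φ.normed volume ⋆[ContinuousLinearMap.lsmul ℝ ℝ] g) x| ≤ C := by
  have := dist_convolution_le (μ := volume) (f := φ.normed volume) (x₀ := x) (z₀ := (0:ℝ)) hC
    φ.support_normed_eq.subset φ.nonneg_normed φ.integral_normed hg.aestronglyMeasurable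
    (fun y _ => by simpa [Real.dist_eq] using hb y)
  simpa [Real.dist_eq] using this


set_option maxHeartbeats 1000000 in
/-- extension of the weak-gradient identity to `C¹` test functions, by mollification. -/
lemma weak_c1 {N : ℕ} {Ω : Set (EuclideanSpace ℝ (Fin N))} (hΩ_open : IsOpen Ω)
    {u : EuclideanSpace ℝ (Fin N) → ℝ}
    {G : EuclideanSpace ℝ (Fin N) → EuclideanSpace ℝ (Fin N)}
    (hG : ∀ φ : EuclideanSpace ℝ (Fin N) → ℝ, ContDiff ℝ (⊤ : ℕ∞) φ → HasCompactSupport φ →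
      tsupport φ ⊆ Ω → ∀ v : EuclideanSpace ℝ (Fin N),
        ∫ x in Ω, u x * fderiv ℝ φ x v = - ∫ x in Ω, φ x * (inner ℝ (G x) v : ℝ))
    (hu_int : Integrable u (volume.restrict Ω))
    (hG_int : Integrable G (volume.restrict Ω))
    {θ : EuclideanSpace ℝ (Fin N) → ℝ}
    (hθ_smooth : ContDiff ℝ 1 θ) (hθ_cpt : HasCompactSupport θ) (hθ_supp : tsupport θ ⊆ Ω)
    (v : EuclideanSpace ℝ (Fin N)) :
    ∫ x in Ω, u x * fderiv ℝ θ x v = - ∫ x in Ω, θ x * (inner ℝ (G x) v : ℝ) := by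
  classical
  obtain ⟨δ, δpos, hδΩ⟩ := hθ_cpt.exists_cthickening_subset_open hΩ_open hθ_supp
  -- bump family
  set ρ : ℕ → ContDiffBump (0 : EuclideanSpace ℝ (Fin N)) := fun n =>
    ⟨δ / (2 * (n + 2)), δ / (n + 2), by positivity,
      div_lt_div_of_pos_left δpos (by positivity) (by nlinarith [Nat.cast_nonneg (α := ℝ) n])⟩
    with hρ
  have hρ_out : ∀ n, (ρ n).rOut = δ / (n + 2) := fun n => rfl
  have hρ_tendsto : Tendsto (fun n => (ρ n).rOut) atTop (𝓝 0) := by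
    simp only [hρ_out]
    exact Tendsto.div_atTop tendsto_const_nhds
      (tendsto_natCast_atTop_atTop.atTop_add tendsto_const_nhds)
  have θcont : Continuous θ := hθ_smooth.continuous
  have θloc : LocallyIntegrable θ volume :=
    (θcont.integrable_of_hasCompactSupport hθ_cpt).locallyIntegrable
  have fθcont : Continuous (fderiv ℝ θ) := hθ_smooth.continuous_fderiv one_ne_zero
  have fθcpt : HasCompactSupport (fderiv ℝ θ) := hθ_cpt.fderiv (𝕜 := ℝ)
  set θn : ℕ → EuclideanSpace ℝ (Fin N) → ℝ := fun n => (ρ n).normed volume ⋆[ContinuousLinearMap.lsmul ℝ ℝ] θ with hθn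
  -- smooth
  have hsmooth : ∀ n, ContDiff ℝ (⊤ : ℕ∞) (θn n) := fun n =>
    HasCompactSupport.contDiff_convolution_left _ (ρ n).hasCompactSupport_normed
      (ρ n).contDiff_normed θloc
  have hcpt : ∀ n, HasCompactSupport (θn n) := fun n =>
    HasCompactSupport.convolution _ (ρ n).hasCompactSupport_normed hθ_cpt
  have hsupp : ∀ n, tsupport (θn n) ⊆ Ω := by
    intro n
    have h1 : Function.support (θn n) ⊆ thickening δ (tsupport θ) := by
      refine (support_convolution_subset _).trans ?_
      rintro x ⟨a, ha, b, hb, rfl⟩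
      rw [(ρ n).support_normed_eq, mem_ball_zero_iff] at ha
      rw [mem_thickening_iff]
      refine ⟨b, subset_tsupport θ hb, ?_⟩
      have : dist (a + b) b = ‖a‖ := by simp [dist_eq_norm]
      rw [this]
      calc ‖a‖ < (ρ n).rOut := ha
        _ ≤ δ / 2 := by
            rw [hρ_out]
            apply div_le_div_of_nonneg_left δpos.le zero_lt_two
            nlinarith [Nat.cast_nonneg (α := ℝ) n]
        _ < δ := by linarith
    refine (closure_minimal (h1.trans (thickening_subset_cthickening _ _))
      isClosed_cthickening).trans hδΩ
  -- bounds
  obtain ⟨M, hM⟩ := hθ_cpt.exists_bound_of_continuous θcont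
  have hM0 : 0 ≤ M := le_trans (norm_nonneg _) (hM 0)
  obtain ⟨M', hM'⟩ := fθcpt.exists_bound_of_continuous fθcont
  have hM'0 : 0 ≤ M' := le_trans (norm_nonneg _) (hM' 0)
  have hθn_bound : ∀ n x, |θn n x| ≤ M := fun n x =>
    bump_conv_abs_le (ρ n) θcont hM0 (fun y => hM y) x
  -- derivative of mollification
  have hfd : ∀ n x, fderiv ℝ (θn n) x v
      = ((ρ n).normed volume ⋆[ContinuousLinearMap.lsmul ℝ ℝ] fun a => fderiv ℝ θ a v) x := by
    intro n x
    have hder := hθ_cpt.hasFDerivAt_convolution_right (μ := volume) (ContinuousLinearMap.lsmul ℝ ℝ)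
      (((ρ n).integrable_normed (μ := volume)).locallyIntegrable) hθ_smooth x
    rw [hder.fderiv]
    exact convolution_precompR_apply (μ := volume) _ (((ρ n).integrable_normed (μ := volume)).locallyIntegrable) fθcpt fθcont x v
  have hfdcontv : Continuous (fun a => fderiv ℝ θ a v) := fθcont.clm_apply continuous_const
  have hfdb : ∀ n x, |fderiv ℝ (θn n) x v| ≤ M' * ‖v‖ := by
    intro n x
    rw [hfd]
    refine bump_conv_abs_le (ρ n) hfdcontv (by positivity) (fun y => ?_) x
    calc |fderiv ℝ θ y v| ≤ ‖fderiv ℝ θ y‖ * ‖v‖ := (fderiv ℝ θ y).le_opNorm v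
      _ ≤ M' * ‖v‖ := mul_le_mul_of_nonneg_right (hM' y) (norm_nonneg v)
  -- pointwise convergences
  have hconv_fd : ∀ x, Tendsto (fun n => fderiv ℝ (θn n) x v) atTop (𝓝 (fderiv ℝ θ x v)) := by
    intro x
    simp only [hfd]
    exact ContDiffBump.convolution_tendsto_right_of_continuous (μ := volume) hρ_tendsto hfdcontv x
  have hconv_θ : ∀ x, Tendsto (fun n => θn n x) atTop (𝓝 (θ x)) := fun x =>
    ContDiffBump.convolution_tendsto_right_of_continuous (μ := volume) hρ_tendsto θcont x
  -- dominated convergence, both sides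
  have hL : Tendsto (fun n => ∫ x in Ω, u x * fderiv ℝ (θn n) x v) atTop
      (𝓝 (∫ x in Ω, u x * fderiv ℝ θ x v)) := by
    refine tendsto_integral_of_dominated_convergence (fun x => ‖u x‖ * (M' * ‖v‖))
      (fun n => hu_int.aestronglyMeasurable.mul ?_)
      (hu_int.norm.mul_const _)
      (fun n => Filter.Eventually.of_forall fun x => ?_)
      (Filter.Eventually.of_forall fun x => (hconv_fd x).const_mul (u x))
    · exact ((((hsmooth n).continuous_fderiv (by simp)).clm_apply continuous_const)).aestronglyMeasurable
    · simp only [Real.norm_eq_abs, abs_mul]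
      exact mul_le_mul_of_nonneg_left (hfdb n x) (abs_nonneg _)
  have hR : Tendsto (fun n => ∫ x in Ω, θn n x * (inner ℝ (G x) v : ℝ)) atTop
      (𝓝 (∫ x in Ω, θ x * (inner ℝ (G x) v : ℝ))) := by
    refine tendsto_integral_of_dominated_convergence (fun x => M * |(inner ℝ (G x) v : ℝ)|)
      (fun n => ?_) (((hG_int.inner_const (𝕜 := ℝ) v).norm.const_mul M).congr ?_)
      (fun n => Filter.Eventually.of_forall fun x => ?_)
      (Filter.Eventually.of_forall fun x => (hconv_θ x).mul_const _)
    · exact (((hsmooth n).continuous).aestronglyMeasurable).mul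
        (hG_int.aestronglyMeasurable.inner (𝕜 := ℝ) aestronglyMeasurable_const)
    · exact Filter.Eventually.of_forall fun x => by simp [Real.norm_eq_abs]
    · simp only [Real.norm_eq_abs, abs_mul]
      exact mul_le_mul_of_nonneg_right (hθn_bound n x) (abs_nonneg _)
  have hEq : ∀ n, ∫ x in Ω, u x * fderiv ℝ (θn n) x v
      = - ∫ x in Ω, θn n x * (inner ℝ (G x) v : ℝ) := fun n =>
    hG (θn n) (hsmooth n) (hcpt n) (hsupp n) v
  have := tendsto_nhds_unique (by simpa only [hEq] using hL) hR.neg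
  linarith [this]

/-- If `Ω` is nonempty open of finite measure, `1 ≤ p < ∞`, `u ∈ W^{1,p}(Ω)`
with weak gradient `G`, and `θ ∈ C_c^1(Ω)` with `∫_Ω θ ≠ 0`, then with the affine function
`g_θ` of constant gradient `b_θ = −(∫_Ω θ)⁻¹ ∫_Ω u(y) ∇θ(y) dy` one has
`∫_Ω |∇(u − g_θ)|^p ≤ (|Ω|^{p−1} ‖θ‖_∞^p / |∫_Ω θ|^p) ∫∫ |G(y) − G(x)|^p dx dy`. -/
theorem statement13 (N : ℕ) (Ω : Set (EuclideanSpace ℝ (Fin N)))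
    (hΩ_open : IsOpen Ω) (hΩ_ne : Ω.Nonempty) (hΩ_fin : volume Ω < ⊤)
    (p : ℝ) (hp1 : 1 ≤ p)
    (u : EuclideanSpace ℝ (Fin N) → ℝ)
    (G : EuclideanSpace ℝ (Fin N) → EuclideanSpace ℝ (Fin N))
    (hu : MemLp u (ENNReal.ofReal p) (volume.restrict Ω))
    (hG : HasWeakGradientOn u G Ω)
    (hGp : MemLp G (ENNReal.ofReal p) (volume.restrict Ω))
    (θ : EuclideanSpace ℝ (Fin N) → ℝ)
    (hθ_smooth : ContDiff ℝ 1 θ) (hθ_cpt : HasCompactSupport θ) (hθ_supp : tsupport θ ⊆ Ω)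
    (hθ_int : ∫ z in Ω, θ z ≠ 0) :
    ∫⁻ x in Ω,
        (‖G x - (-(∫ z in Ω, θ z)⁻¹) • (∫ y in Ω, u y • gradient θ y)‖₊ : ℝ≥0∞) ^ p
      ≤ ENNReal.ofReal
          ((volume Ω).toReal ^ (p - 1) * (⨆ x, |θ x|) ^ p / |∫ z in Ω, θ z| ^ p) *
        ∫⁻ z, (‖G z.2 - G z.1‖₊ : ℝ≥0∞) ^ p
          ∂((volume.restrict Ω).prod (volume.restrict Ω)) := by
  classical
  have hp0 : (0:ℝ) ≤ p := le_trans zero_le_one hp1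
  haveI : IsFiniteMeasure (volume.restrict Ω) :=
    ⟨by rwa [Measure.restrict_apply_univ]⟩
  have hp_le : (1 : ℝ≥0∞) ≤ ENNReal.ofReal p := by
    rw [← ENNReal.ofReal_one]; exact ENNReal.ofReal_le_ofReal hp1
  have hu_int : Integrable u (volume.restrict Ω) :=
    memLp_one_iff_integrable.mp (hu.mono_exponent hp_le)
  have hG_int : Integrable G (volume.restrict Ω) :=
    memLp_one_iff_integrable.mp (hGp.mono_exponent hp_le)
  have θcont : Continuous θ := hθ_smooth.continuous
  have fθcont : Continuous (fderiv ℝ θ) := hθ_smooth.continuous_fderiv one_ne_zero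
  obtain ⟨M', hM'⟩ := (hθ_cpt.fderiv (𝕜 := ℝ)).exists_bound_of_continuous fθcont
  -- sup of |θ|
  set M : ℝ := ⨆ x, |θ x| with hMdef
  obtain ⟨M₀, hM₀⟩ := hθ_cpt.exists_bound_of_continuous θcont
  have hbdd : BddAbove (Set.range fun x => |θ x|) :=
    ⟨M₀, by rintro _ ⟨x, rfl⟩; simpa [Real.norm_eq_abs] using hM₀ x⟩
  have hθM : ∀ y, |θ y| ≤ M := fun y => le_ciSup hbdd y
  have hM0 : 0 ≤ M := le_trans (abs_nonneg _) (hθM 0)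
  -- gradient facts
  have hgrad_cont : Continuous (gradient θ) :=
    (InnerProductSpace.toDual ℝ _).symm.continuous.comp fθcont
  have hgrad_inner : ∀ y w, (inner ℝ (gradient θ y) w : ℝ) = fderiv ℝ θ y w := fun y w =>
    InnerProductSpace.toDual_symm_apply
  have hgrad_norm : ∀ y, ‖gradient θ y‖ ≤ M' := fun y => by
    simpa only [gradient, LinearIsometryEquiv.norm_map] using hM' y
  -- integrability of the integrands
  have hint1 : Integrable (fun y => u y • gradient θ y) (volume.restrict Ω) := by
    refine Integrable.mono' (hu_int.norm.mul_const M')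
      (hu_int.aestronglyMeasurable.smul hgrad_cont.aestronglyMeasurable)
      (Filter.Eventually.of_forall fun y => ?_)
    rw [norm_smul]
    exact mul_le_mul_of_nonneg_left (hgrad_norm y) (norm_nonneg _)
  have hint2 : Integrable (fun y => θ y • G y) (volume.restrict Ω) := by
    refine Integrable.mono' (hG_int.norm.const_mul M)
      (θcont.aestronglyMeasurable.smul hG_int.aestronglyMeasurable)
      (Filter.Eventually.of_forall fun y => ?_)
    rw [norm_smul, Real.norm_eq_abs]
    exact mul_le_mul_of_nonneg_right (hθM y) (norm_nonneg _)
  -- KEY vector identity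
  have hkey : (∫ y in Ω, u y • gradient θ y) = - ∫ y in Ω, θ y • G y := by
    apply ext_inner_right ℝ
    intro w
    have hwc : ∀ (f : EuclideanSpace ℝ (Fin N) → EuclideanSpace ℝ (Fin N)),
        Integrable f (volume.restrict Ω) →
        (inner ℝ (∫ y in Ω, f y) w : ℝ) = ∫ y in Ω, (inner ℝ (f y) w : ℝ) := by
      intro f hf
      rw [real_inner_comm, ← integral_inner hf]
      simp_rw [real_inner_comm]
    rw [inner_neg_left, hwc _ hint2, hwc _ hint1]
    have e1 : ∀ y, (inner ℝ (u y • gradient θ y) w : ℝ) = u y * fderiv ℝ θ y w := fun y => by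
      rw [real_inner_smul_left, hgrad_inner]
    have e2 : ∀ y, (inner ℝ (θ y • G y) w : ℝ) = θ y * (inner ℝ (G y) w : ℝ) := fun y => by
      rw [real_inner_smul_left]
    simp_rw [e1, e2]
    exact weak_c1 hΩ_open hG.2.2 hu_int hG_int hθ_smooth hθ_cpt hθ_supp w
  -- notation
  set S : ℝ := ∫ z in Ω, θ z with hS
  set b : EuclideanSpace ℝ (Fin N) := (-S⁻¹) • ∫ y in Ω, u y • gradient θ y with hbdef
  have hb : b = S⁻¹ • ∫ y in Ω, θ y • G y := by
    rw [hbdef, hkey, neg_smul, smul_neg, neg_neg]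
  -- θ integrable on Ω
  have hθ_intble : Integrable θ (volume.restrict Ω) :=
    (θcont.integrable_of_hasCompactSupport hθ_cpt).restrict
  -- measurability
  have hGm : AEMeasurable G (volume.restrict Ω) := hG_int.aestronglyMeasurable.aemeasurable
  -- pointwise bound
  have hpt : ∀ x, (‖G x - b‖₊ : ℝ≥0∞) ^ p
      ≤ (ENNReal.ofReal (|S|⁻¹ * M)) ^ p *
        ((volume Ω) ^ (p - 1) * ∫⁻ y in Ω, (‖G y - G x‖₊ : ℝ≥0∞) ^ p) := by
    intro x
    have hsubint : Integrable (fun y => G x - G y) (volume.restrict Ω) :=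
      (integrable_const (G x)).sub hG_int
    have e1 : G x - b = S⁻¹ • ∫ y in Ω, θ y • (G x - G y) := by
      have hsplit : (∫ y in Ω, θ y • (G x - G y))
          = (∫ y in Ω, θ y) • G x - ∫ y in Ω, θ y • G y := by
        have : ∀ y, θ y • (G x - G y) = θ y • G x - θ y • G y := fun y => smul_sub _ _ _
        simp_rw [this]
        rw [integral_sub (hθ_intble.smul_const (G x)) hint2, integral_smul_const]
      rw [hb, hsplit, smul_sub, smul_smul, inv_mul_cancel₀ hθ_int, one_smul]
    have e2 : ‖G x - b‖ ≤ |S|⁻¹ * (M * ∫ y in Ω, ‖G x - G y‖) := by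
      rw [e1, norm_smul, Real.norm_eq_abs, abs_inv]
      refine mul_le_mul_of_nonneg_left ?_ (by positivity)
      calc ‖∫ y in Ω, θ y • (G x - G y)‖ ≤ ∫ y in Ω, ‖θ y • (G x - G y)‖ :=
            norm_integral_le_integral_norm _
        _ ≤ ∫ y in Ω, M * ‖G x - G y‖ := by
            refine integral_mono_of_nonneg (Filter.Eventually.of_forall fun y => norm_nonneg _)
              (hsubint.norm.const_mul M) (Filter.Eventually.of_forall fun y => ?_)
            simp only [norm_smul, Real.norm_eq_abs]
            exact mul_le_mul_of_nonneg_right (hθM y) (norm_nonneg _)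
        _ = M * ∫ y in Ω, ‖G x - G y‖ := integral_const_mul _ _
    have e3 : ∫ y in Ω, ‖G x - G y‖ = (∫⁻ y in Ω, (‖G y - G x‖₊ : ℝ≥0∞)).toReal := by
      rw [integral_norm_eq_lintegral_enorm (f := fun y => G x - G y)
        (aestronglyMeasurable_const.sub hG_int.aestronglyMeasurable)]
      congr 1
      refine lintegral_congr fun y => ?_
      rw [← nnnorm_neg, neg_sub, enorm_eq_nnnorm]
    have e4 : (‖G x - b‖₊ : ℝ≥0∞)
        ≤ ENNReal.ofReal (|S|⁻¹ * M) * ∫⁻ y in Ω, (‖G y - G x‖₊ : ℝ≥0∞) := by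
      rw [← enorm_eq_nnnorm, ← ofReal_norm]
      calc ENNReal.ofReal ‖G x - b‖
          ≤ ENNReal.ofReal (|S|⁻¹ * M * (∫⁻ y in Ω, (‖G y - G x‖₊ : ℝ≥0∞)).toReal) := by
            apply ENNReal.ofReal_le_ofReal
            rw [mul_assoc]
            calc ‖G x - b‖ ≤ |S|⁻¹ * (M * ∫ y in Ω, ‖G x - G y‖) := e2
              _ = |S|⁻¹ * (M * (∫⁻ y in Ω, (‖G y - G x‖₊ : ℝ≥0∞)).toReal) := by rw [e3]
        _ ≤ ENNReal.ofReal (|S|⁻¹ * M) * ∫⁻ y in Ω, (‖G y - G x‖₊ : ℝ≥0∞) := by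
            rw [ENNReal.ofReal_mul (by positivity)]
            exact mul_le_mul_right ENNReal.ofReal_toReal_le _
    calc (‖G x - b‖₊ : ℝ≥0∞) ^ p
        ≤ (ENNReal.ofReal (|S|⁻¹ * M) * ∫⁻ y in Ω, (‖G y - G x‖₊ : ℝ≥0∞)) ^ p :=
          ENNReal.rpow_le_rpow e4 hp0
      _ = (ENNReal.ofReal (|S|⁻¹ * M)) ^ p * (∫⁻ y in Ω, (‖G y - G x‖₊ : ℝ≥0∞)) ^ p :=
          ENNReal.mul_rpow_of_nonneg _ _ hp0
      _ ≤ (ENNReal.ofReal (|S|⁻¹ * M)) ^ p *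
          ((volume Ω) ^ (p - 1) * ∫⁻ y in Ω, (‖G y - G x‖₊ : ℝ≥0∞) ^ p) := by
          refine mul_le_mul_right ?_ _
          have := lint_rpow_le (volume.restrict Ω)
            (f := fun y => (‖G y - G x‖₊ : ℝ≥0∞)) ((hGm.sub aemeasurable_const).enorm) hp1
          rwa [Measure.restrict_apply_univ] at this
  -- constant identification
  have hC : (ENNReal.ofReal (|S|⁻¹ * M)) ^ p * (volume Ω) ^ (p - 1)
      = ENNReal.ofReal ((volume Ω).toReal ^ (p - 1) * M ^ p / |S| ^ p) := by
    have hv : (volume Ω) ^ (p - 1) = ENNReal.ofReal ((volume Ω).toReal ^ (p - 1)) := by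
      rw [← ENNReal.ofReal_rpow_of_nonneg ENNReal.toReal_nonneg (by linarith : (0:ℝ) ≤ p - 1),
        ENNReal.ofReal_toReal hΩ_fin.ne]
    rw [ENNReal.ofReal_rpow_of_nonneg (by positivity) hp0, hv,
      ← ENNReal.ofReal_mul (by positivity)]
    congr 1
    rw [Real.mul_rpow (by positivity) hM0, Real.inv_rpow (abs_nonneg _)]
    ring
  -- measurability on the product
  have hprodm : AEMeasurable (fun z : EuclideanSpace ℝ (Fin N) × EuclideanSpace ℝ (Fin N) =>
      (‖G z.2 - G z.1‖₊ : ℝ≥0∞) ^ p) ((volume.restrict Ω).prod (volume.restrict Ω)) := by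
    refine (ENNReal.continuous_rpow_const.measurable.comp_aemeasurable ?_)
    exact (hGm.comp_snd.sub hGm.comp_fst).enorm
  -- final assembly
  calc ∫⁻ x in Ω, (‖G x - b‖₊ : ℝ≥0∞) ^ p
      ≤ ∫⁻ x in Ω, (ENNReal.ofReal ((volume Ω).toReal ^ (p - 1) * M ^ p / |S| ^ p) *
          ∫⁻ y in Ω, (‖G y - G x‖₊ : ℝ≥0∞) ^ p) := by
        refine lintegral_mono fun x => ?_
        refine le_trans (hpt x) (le_of_eq ?_)
        rw [← mul_assoc, hC]
    _ = ENNReal.ofReal ((volume Ω).toReal ^ (p - 1) * M ^ p / |S| ^ p) *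
          ∫⁻ x in Ω, ∫⁻ y in Ω, (‖G y - G x‖₊ : ℝ≥0∞) ^ p := by
        rw [lintegral_const_mul' _ _ ENNReal.ofReal_ne_top]
    _ = ENNReal.ofReal ((volume Ω).toReal ^ (p - 1) * M ^ p / |S| ^ p) *
        ∫⁻ z, (‖G z.2 - G z.1‖₊ : ℝ≥0∞) ^ p
          ∂((volume.restrict Ω).prod (volume.restrict Ω)) := by
        rw [lintegral_prod _ hprodm]
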